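/- Let α > 0, c ≥ 0, and let B₁, …, Bₙ, D₁, …, Dₙ be positive reals and M > 0 such that for each i, Bᵢ ≤ 3M + 3·(2c)^{1/α}/Dᵢ^{1/α}, and such that Dₙ^{1/α} · ∑_{i=1}^n 1/Dᵢ^{1/α} ≤ 1/(1 − 2^{−1/α}). If S ≤ 4·∑_{i=1}^n Bᵢ and S ≥ 24·M·n, then Dₙ ≤ 4·(24/(2^{1/α} − 1))^α · c/S^α. -/

import Mathlib

/-- Arithmetic core of the chaining argument in the upper-bound proof. -/
theorem stmt5 (α c M S : ℝ) (n : ℕ) (hn : 1 ≤ n)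
    (hα : 0 < α) (hc : 0 ≤ c) (hM : 0 < M) (hS : 0 < S)
    (B D : ℕ → ℝ)
    (hB : ∀ i ∈ Finset.Icc 1 n, 0 < B i) (hD : ∀ i ∈ Finset.Icc 1 n, 0 < D i)
    (hbound : ∀ i ∈ Finset.Icc 1 n, B i ≤ 3 * M + 3 * (2 * c) ^ (1 / α) / (D i) ^ (1 / α))
    (hchain : (D n) ^ (1 / α) * ∑ i ∈ Finset.Icc 1 n, 1 / (D i) ^ (1 / α)
        ≤ 1 / (1 - (2 : ℝ) ^ (-(1 / α))))
    (hS4 : S ≤ 4 * ∑ i ∈ Finset.Icc 1 n, B i) (hS24 : 24 * M * n ≤ S) :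
    D n ≤ 4 * (24 / ((2 : ℝ) ^ (1 / α) - 1)) ^ α * (c / S ^ α) := by
  set r := 1 / α with hr_def
  have hr : 0 < r := by positivity
  have h2r1 : (1:ℝ) < (2:ℝ) ^ r :=
    (Real.one_lt_rpow_iff_of_pos (by norm_num)).mpr (Or.inl ⟨by norm_num, hr⟩)
  have h2rpos : (0:ℝ) < (2:ℝ) ^ r := Real.rpow_pos_of_pos (by norm_num) r
  have h2neg : (2:ℝ) ^ (-r) = ((2:ℝ) ^ r)⁻¹ := Real.rpow_neg (by norm_num) r
  have h1m : 0 < 1 - (2:ℝ) ^ (-r) := by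
    rw [h2neg]
    have : ((2:ℝ) ^ r)⁻¹ < 1 := inv_lt_one_of_one_lt₀ h2r1
    linarith
  set T := ∑ i ∈ Finset.Icc 1 n, 1 / (D i) ^ r with hT_def
  have hTnn : 0 ≤ T := Finset.sum_nonneg fun i hi => by
    have := hD i hi; positivity
  have hcard : (Finset.Icc 1 n).card = n := by rw [Nat.card_Icc]; omega
  have h2cr : (0:ℝ) ≤ (2 * c) ^ r := Real.rpow_nonneg (by linarith) r
  have hsum : ∑ i ∈ Finset.Icc 1 n, B i ≤ 3 * M * n + 3 * (2 * c) ^ r * T := by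
    calc ∑ i ∈ Finset.Icc 1 n, B i
        ≤ ∑ i ∈ Finset.Icc 1 n, (3 * M + 3 * (2 * c) ^ r / (D i) ^ r) :=
          Finset.sum_le_sum hbound
      _ = 3 * M * n + 3 * (2 * c) ^ r * T := by
          rw [Finset.sum_add_distrib, Finset.sum_const, hcard, hT_def, Finset.mul_sum]
          congr 1
          · rw [nsmul_eq_mul]; ring
          · exact Finset.sum_congr rfl fun i hi => by rw [mul_one_div]
  have hST : S ≤ 24 * (2 * c) ^ r * T := by nlinarith
  have hDnpos : 0 < D n := hD n (Finset.mem_Icc.mpr ⟨hn, le_refl n⟩)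
  have hDnr : 0 < (D n) ^ r := Real.rpow_pos_of_pos hDnpos r
  have hkey : S * (D n) ^ r ≤ 24 * (2 * c) ^ r * (1 / (1 - (2:ℝ) ^ (-r))) := by
    have h1 := mul_le_mul_of_nonneg_right hST hDnr.le
    have h2 := mul_le_mul_of_nonneg_left hchain
      (by positivity : (0:ℝ) ≤ 24 * (2 * c) ^ r)
    nlinarith
  have hA : (D n) ^ r ≤ 24 * (2 * c) ^ r * (1 / (1 - (2:ℝ) ^ (-r))) / S := by
    rw [le_div_iff₀ hS]; linarith
  have hrα : r * α = 1 := by rw [hr_def]; field_simp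
  have hfin : D n ≤ (24 * (2 * c) ^ r * (1 / (1 - (2:ℝ) ^ (-r))) / S) ^ α := by
    calc D n = ((D n) ^ r) ^ α := by
          rw [← Real.rpow_mul hDnpos.le, hrα, Real.rpow_one]
      _ ≤ _ := Real.rpow_le_rpow hDnr.le hA hα.le
  have heq : 24 * (2 * c) ^ r * (1 / (1 - (2:ℝ) ^ (-r))) / S
      = (24 / ((2:ℝ) ^ r - 1)) * ((4 * c) ^ r / S) := by
    rw [h2neg]
    have h4 : (4 * c) ^ r = (2 * c) ^ r * (2:ℝ) ^ r := by
      rw [← Real.mul_rpow (by linarith) (by norm_num)]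
      congr 1; ring
    rw [h4]
    have hne1 : (2:ℝ) ^ r - 1 ≠ 0 := by linarith
    have hne2 : 1 - ((2:ℝ) ^ r)⁻¹ ≠ 0 := by rw [← h2neg]; linarith
    field_simp
  rw [heq] at hfin
  have hrw : ((24 / ((2:ℝ) ^ r - 1)) * ((4 * c) ^ r / S)) ^ α
      = (24 / ((2:ℝ) ^ r - 1)) ^ α * (4 * c / S ^ α) := by
    rw [Real.mul_rpow (div_nonneg (by norm_num) (by linarith)) (div_nonneg (Real.rpow_nonneg (by linarith) r) hS.le),
      Real.div_rpow (Real.rpow_nonneg (by linarith) r) hS.le,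
      ← Real.rpow_mul (by linarith : (0:ℝ) ≤ 4 * c), hrα, Real.rpow_one]
  rw [hrw] at hfin
  calc D n ≤ (24 / ((2:ℝ) ^ r - 1)) ^ α * (4 * c / S ^ α) := hfin
    _ = 4 * (24 / ((2:ℝ) ^ r - 1)) ^ α * (c / S ^ α) := by ring
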